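/- arXiv:2405.21053 — 2 statements merged into one kernel-verified Lean document; each statement's English description precedes it below -/
import Mathlib

section
/- Let Q_n be the quiver with vertices 0, 1, ..., n and an edge from i to j whenever j - i is odd and j - i ≥ 3. Let p_m denote the number of paths from 0 to m. Then p_m satisfies p_{m+2} = p_m + p_{m-1} with p_0 = 1, p_1 = p_2 = 0, and the dimension of the path algebra kQ_n equals Σ_{m=0}^n p_m (n - m + 1). -/
/-- There is an edge from `a` to `b` in the quiver of mixed Tate motives over `ℤ`
iff `b - a` is odd and `≥ 3`. -/
def MTStep (a b : ℕ) : Prop := a < b ∧ Odd (b - a) ∧ 3 ≤ b - a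

/-- A path from `i` to `j`: the list of visited vertices, starting at `i` and ending at `j`,
with each consecutive pair an edge.  (The trivial path at `i` is `[i]`.) -/
def MTPath (i j : ℕ) : Type :=
  { l : List ℕ // l.Chain' MTStep ∧ l.head? = some i ∧ l.getLast? = some j }

/-- The set of all paths of the quiver `Q_n` (vertices `0, 1, ..., n`). -/
def MTPathIn (n : ℕ) : Type :=
  { l : List ℕ // l.Chain' MTStep ∧ l ≠ [] ∧ ∀ v ∈ l, v ≤ n }

namespace MTAux

instance decMTStep : ∀ a b : ℕ, Decidable (MTStep a b) := fun a b => by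
  unfold MTStep; infer_instance

/-- The set of paths from `i` to `j`. -/
def S (i j : ℕ) : Set (List ℕ) :=
  {l | l.Chain' MTStep ∧ l.head? = some i ∧ l.getLast? = some j}

lemma card_S (i j : ℕ) : Nat.card (MTPath i j) = (S i j).ncard := by
  rw [← Nat.card_coe_set_eq]; rfl

lemma sorted_of_chain' {l : List ℕ} (h : l.Chain' MTStep) : l.Pairwise (· < ·) :=
  List.isChain_iff_pairwise.mp (h.imp fun a b hs => hs.1)

lemma head_le {l : List ℕ} (h : l.Pairwise (· < ·)) {i x : ℕ} (hi : l.head? = some i)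
    (hx : x ∈ l) : i ≤ x := by
  cases l with
  | nil => simp at hi
  | cons a t =>
    simp only [List.head?_cons, Option.some.injEq] at hi
    subst hi
    rcases List.mem_cons.mp hx with rfl | hxt
    · exact le_rfl
    · exact le_of_lt ((List.pairwise_cons.mp h).1 x hxt)

lemma le_getLast {l : List ℕ} (h : l.Pairwise (· < ·)) {j x : ℕ} (hj : l.getLast? = some j)
    (hx : x ∈ l) : x ≤ j := by
  induction l with
  | nil => simp at hj
  | cons a t ih =>
    cases t with
    | nil =>
      simp_all
    | cons b u =>
      rw [List.getLast?_cons_cons] at hj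
      have hj' : j ∈ b :: u := List.mem_of_mem_getLast? hj
      rcases List.mem_cons.mp hx with rfl | hxt
      · exact le_of_lt ((List.pairwise_cons.mp h).1 j hj')
      · exact ih (List.pairwise_cons.mp h).2 hj hxt

lemma finite_S (i j : ℕ) : (S i j).Finite := by
  apply Set.Finite.of_finite_image (f := List.toFinset)
  · apply Set.Finite.subset ((Finset.range (j + 1)).powerset : Finset (Finset ℕ)).finite_toSet
    rintro _ ⟨l, hl, rfl⟩
    rw [Finset.mem_coe, Finset.mem_powerset]
    intro x hx
    simp only [List.mem_toFinset] at hx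
    have := le_getLast (sorted_of_chain' hl.1) hl.2.2 hx
    rw [Finset.mem_range]; omega
  · intro l₁ h₁ l₂ h₂ he
    have hs₁ := sorted_of_chain' h₁.1
    have hs₂ := sorted_of_chain' h₂.1
    have hn₁ := hs₁.nodup
    have hn₂ := hs₂.nodup
    have hm : (l₁ : Multiset ℕ) = (l₂ : Multiset ℕ) := by
      have := congrArg Finset.val he
      rwa [List.toFinset_val, List.toFinset_val, List.dedup_eq_self.mpr hn₁,
        List.dedup_eq_self.mpr hn₂] at this
    exact List.Perm.eq_of_pairwise' hs₁ hs₂ (Quotient.exact hm)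

/-- Vertices with an edge to `j`. -/
def P (j : ℕ) : Finset ℕ := (Finset.range j).filter (fun a => MTStep a j)

lemma S_self (i : ℕ) : S i i = {[i]} := by
  ext l
  constructor
  · rintro ⟨hc, hh, hg⟩
    cases l with
    | nil => simp at hh
    | cons a t =>
      simp only [List.head?_cons, Option.some.injEq] at hh
      subst hh
      cases t with
      | nil => rfl
      | cons b u =>
        exfalso
        rw [List.getLast?_cons_cons] at hg
        have hi := List.mem_of_mem_getLast? hg
        have := (List.pairwise_cons.mp (sorted_of_chain' hc)).1 _ hi
        omega
  · rintro rfl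
    exact ⟨List.isChain_singleton i, rfl, rfl⟩

lemma S_decomp {i j : ℕ} (hij : i < j) :
    S i j = ⋃ a ∈ P j, (fun l => l ++ [j]) '' S i a := by
  ext l
  simp only [Set.mem_iUnion, Set.mem_image]
  constructor
  · rintro ⟨hc, hh, hg⟩
    have hne : l ≠ [] := by rintro rfl; simp at hh
    have hdec : l.dropLast ++ [j] = l := List.dropLast_append_getLast? j hg
    have hne' : l.dropLast ≠ [] := by
      intro h0
      rw [h0, List.nil_append] at hdec
      rw [← hdec] at hh hg
      simp at hh hg
      omega
    rw [← hdec] at hc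
    unfold List.Chain' at hc
    rw [List.isChain_append] at hc
    obtain ⟨hc₁, -, hrel⟩ := hc
    obtain ⟨a, ha⟩ := List.getLast?_isSome.mpr hne' |> Option.isSome_iff_exists.mp
    have hstep : MTStep a j := hrel a ha j rfl
    refine ⟨a, ?_, l.dropLast, ⟨hc₁, ?_, ha⟩, hdec⟩
    · simp only [P, Finset.mem_filter, Finset.mem_range]
      exact ⟨hstep.1, hstep⟩
    · rw [← hdec] at hh
      rwa [List.head?_append_of_ne_nil _ hne'] at hh
  · rintro ⟨a, haP, l', ⟨hc, hh, hg⟩, rfl⟩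
    have hstep : MTStep a j := (Finset.mem_filter.mp haP).2
    have hne' : l' ≠ [] := by rintro rfl; simp at hh
    refine ⟨?_, ?_, ?_⟩
    · unfold List.Chain'
      rw [List.isChain_append]
      refine ⟨hc, List.isChain_singleton j, ?_⟩
      intro x hx y hy
      simp only [List.head?_cons, Option.mem_def, Option.some.injEq] at hy
      subst hy
      rw [Option.mem_def, hg] at hx
      cases hx; exact hstep
    · rwa [List.head?_append_of_ne_nil _ hne']
    · simp [List.getLast?_concat]

lemma ncard_biUnion {ι : Type*} (s : Finset ι) (f : ι → Set (List ℕ))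
    (hfin : ∀ i ∈ s, (f i).Finite)
    (hdis : ∀ i ∈ s, ∀ j ∈ s, i ≠ j → Disjoint (f i) (f j)) :
    (⋃ i ∈ s, f i).ncard = ∑ i ∈ s, (f i).ncard := by
  classical
  induction s using Finset.induction with
  | empty => simp
  | @insert a s ha ih =>
    rw [Finset.sum_insert ha, Finset.set_biUnion_insert]
    rw [Set.ncard_union_eq ?disj (hfin a (Finset.mem_insert_self a s)) ?fin]
    case disj =>
      refine Set.disjoint_iUnion₂_right.mpr fun i hi => ?_
      exact hdis a (Finset.mem_insert_self a s) i (Finset.mem_insert_of_mem hi)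
        (by rintro rfl; exact ha hi)
    case fin =>
      exact Set.Finite.biUnion s.finite_toSet
        (fun i hi => hfin i (Finset.mem_insert_of_mem hi))
    rw [ih (fun i hi => hfin i (Finset.mem_insert_of_mem hi))
      (fun i hi j hj => hdis i (Finset.mem_insert_of_mem hi) j (Finset.mem_insert_of_mem hj))]

lemma ncard_S_eq_sum {i j : ℕ} (hij : i < j) :
    (S i j).ncard = ∑ a ∈ P j, (S i a).ncard := by
  rw [S_decomp hij, ncard_biUnion]
  · refine Finset.sum_congr rfl fun a _ => ?_
    exact Set.ncard_image_of_injective _ (List.append_left_injective [j])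
  · exact fun a _ => ((finite_S i a).image _)
  · intro a _ b _ hab
    rw [Set.disjoint_left]
    rintro _ ⟨l₁, hl₁, rfl⟩ ⟨l₂, hl₂, he⟩
    have hl : l₂ = l₁ := List.append_left_injective [j] he
    subst hl
    have hab' : (some a : Option ℕ) = some b := hl₁.2.2.symm.trans hl₂.2.2
    exact hab (Option.some_injective _ hab')

lemma step_add {a b i : ℕ} (h : MTStep a b) : MTStep (a + i) (b + i) := by
  obtain ⟨h1, h2, h3⟩ := h
  refine ⟨by omega, ?_, by omega⟩
  have : b + i - (a + i) = b - a := by omega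
  rwa [this]

lemma step_sub {a b i : ℕ} (h : MTStep a b) (hia : i ≤ a) : MTStep (a - i) (b - i) := by
  obtain ⟨h1, h2, h3⟩ := h
  refine ⟨by omega, ?_, by omega⟩
  have : b - i - (a - i) = b - a := by omega
  rwa [this]

lemma S_shift (i d : ℕ) : S i (i + d) = (List.map (· + i)) '' S 0 d := by
  ext l
  constructor
  · rintro ⟨hc, hh, hg⟩
    have hall : ∀ x ∈ l, i ≤ x := fun x hx => head_le (sorted_of_chain' hc) hh hx
    refine ⟨l.map (· - i), ⟨?_, ?_, ?_⟩, ?_⟩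
    · unfold List.Chain'
      rw [List.isChain_map]
      have : ∀ (m : List ℕ), m.Chain' MTStep → (∀ x ∈ m, i ≤ x) →
          m.Chain' (fun a b => MTStep (a - i) (b - i)) := by
        intro m
        induction m with
        | nil => intro _ _; exact List.isChain_nil
        | cons a t iht =>
          intro hm hall'
          unfold List.Chain' at hm ⊢
          rw [List.isChain_cons] at hm ⊢
          refine ⟨fun y hy => ?_, iht hm.2 fun x hx => hall' x (List.mem_cons_of_mem a hx)⟩
          · rcases t with - | ⟨b, u⟩
            · simp at hy
            · simp only [List.head?_map, List.head?_cons, Option.map_some, Option.mem_def,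
                Option.some.injEq] at hy
              subst hy
              exact step_sub (hm.1 b rfl) (hall' a (List.mem_cons_self (a := a) (l := b :: u)))
      exact this l hc hall
    · rw [List.head?_map, hh]
      simp
    · rw [List.getLast?_map, hg]
      simp
    · rw [List.map_map]
      have : ∀ x ∈ l, (((· + i) ∘ (· - i)) x) = id x := by
        intro x hx
        have := hall x hx
        simp only [Function.comp_apply, id_eq]
        omega
      rw [List.map_congr_left this, List.map_id]
  · rintro ⟨l₀, ⟨hc, hh, hg⟩, rfl⟩
    refine ⟨?_, ?_, ?_⟩
    · unfold List.Chain'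
      rw [List.isChain_map]
      exact hc.imp fun a b h => step_add h
    · rw [List.head?_map, hh]; simp
    · rw [List.getLast?_map, hg]; simp [Nat.add_comm]

lemma ncard_S_shift (i d : ℕ) : (S i (i + d)).ncard = (S 0 d).ncard := by
  rw [S_shift, Set.ncard_image_of_injective _ (List.map_injective_iff.mpr
    (fun a b h => by omega))]

lemma S_empty_of_lt {i j : ℕ} (h : j < i) : S i j = ∅ := by
  ext l
  simp only [Set.mem_empty_iff_false, iff_false]
  rintro ⟨hc, hh, hg⟩
  have hi : i ∈ l := List.mem_of_mem_head? (by rw [hh]; rfl)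
  have := le_getLast (sorted_of_chain' hc) hg hi
  omega

lemma sum_triangle (p : ℕ → ℕ) : ∀ n : ℕ,
    ∑ j ∈ Finset.range (n + 1), ∑ d ∈ Finset.range (j + 1), p d
      = ∑ m ∈ Finset.range (n + 1), p m * (n - m + 1) := by
  intro n
  induction n with
  | zero => simp
  | succ n ih =>
    calc ∑ j ∈ Finset.range (n + 2), ∑ d ∈ Finset.range (j + 1), p d
        = (∑ m ∈ Finset.range (n + 1), p m * (n - m + 1))
            + ((∑ d ∈ Finset.range (n + 1), p d) + p (n + 1)) := by
          rw [Finset.sum_range_succ, ih, Finset.sum_range_succ]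
          congr 1
          exact Finset.sum_range_succ _ _
      _ = (∑ m ∈ Finset.range (n + 1), (p m * (n - m + 1) + p m)) + p (n + 1) := by
          rw [Finset.sum_add_distrib]; ring
      _ = (∑ m ∈ Finset.range (n + 1), p m * ((n + 1) - m + 1))
            + p (n + 1) * ((n + 1) - (n + 1) + 1) := by
          congr 1
          · refine Finset.sum_congr rfl fun m hm => ?_
            have hm' : m ≤ n := Nat.lt_succ_iff.mp (Finset.mem_range.mp hm)
            have h1 : (n + 1) - m + 1 = (n - m + 1) + 1 := by omega
            rw [h1]; ring
          · simp
      _ = ∑ m ∈ Finset.range (n + 2), p m * ((n + 1) - m + 1) :=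
          (Finset.sum_range_succ _ _).symm

end MTAux

open MTAux in
/-- Let `Q_n` be the quiver with vertices `0, ..., n` and an edge from `i`
to `j` whenever `j - i` is odd and `≥ 3`, and let `p m` be the number of paths from `0` to `m`.
Then `p` satisfies `p (m+2) = p m + p (m-1)` (for `m ≥ 1`) with `p 0 = 1`, `p 1 = p 2 = 0`,
and the dimension of the path algebra `k Q_n` — which equals the total number of paths
in `Q_n` — is `∑_{m=0}^{n} p m * (n - m + 1)`. -/
theorem stmt18 (p : ℕ → ℕ) (hp : ∀ m, p m = Nat.card (MTPath 0 m)) (n : ℕ) :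
    (p 0 = 1 ∧ p 1 = 0 ∧ p 2 = 0 ∧ ∀ m : ℕ, 1 ≤ m → p (m + 2) = p m + p (m - 1)) ∧
    Nat.card (MTPathIn n) = ∑ m ∈ Finset.range (n + 1), p m * (n - m + 1) := by
  classical
  have hp' : ∀ m, p m = (S 0 m).ncard := fun m => by rw [hp m, card_S]
  have hp0 : p 0 = 1 := by rw [hp' 0, S_self]; simp
  -- recurrence core: for 1 ≤ m, p m = ∑ a ∈ P m, p a
  have hrec : ∀ m : ℕ, 1 ≤ m → p m = ∑ a ∈ P m, p a := by
    intro m hm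
    rw [hp' m, ncard_S_eq_sum (by omega)]
    exact Finset.sum_congr rfl fun a _ => (hp' a).symm
  have hPm : ∀ m, P m = (Finset.range m).filter (fun a => MTStep a m) := fun _ => rfl
  have hP1 : P 1 = ∅ := by
    apply Finset.filter_eq_empty_iff.mpr
    intro a ha
    simp only [Finset.mem_range] at ha
    rintro ⟨h1, h2, h3⟩
    omega
  have hP2 : P 2 = ∅ := by
    apply Finset.filter_eq_empty_iff.mpr
    intro a ha
    simp only [Finset.mem_range] at ha
    rintro ⟨h1, h2, h3⟩
    omega
  have hp1 : p 1 = 0 := by rw [hrec 1 le_rfl, hP1, Finset.sum_empty]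
  have hp2 : p 2 = 0 := by rw [hrec 2 (by omega), hP2, Finset.sum_empty]
  have hrec2 : ∀ m : ℕ, 1 ≤ m → p (m + 2) = p m + p (m - 1) := by
    intro m hm
    have hPeq : P (m + 2) = insert (m - 1) (P m) := by
      ext a
      simp only [P, Finset.mem_insert, Finset.mem_filter, Finset.mem_range, MTStep,
        Nat.odd_iff]
      omega
    have hmem : m - 1 ∉ P m := by
      simp only [P, Finset.mem_filter, Finset.mem_range, MTStep, Nat.odd_iff]
      omega
    rw [hrec (m + 2) (by omega), hPeq, Finset.sum_insert hmem]
    rcases Nat.lt_or_ge m 3 with h3 | h3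
    · interval_cases m
      · rw [hP1, Finset.sum_empty, hp1]; simp
      · rw [hP2, Finset.sum_empty, hp2]; simp
    · rw [hrec m (by omega)]
      omega
  refine ⟨⟨hp0, hp1, hp2, hrec2⟩, ?_⟩
  -- Part 2
  have hcard : Nat.card (MTPathIn n)
      = ({l : List ℕ | l.Chain' MTStep ∧ l ≠ [] ∧ ∀ v ∈ l, v ≤ n}).ncard := by
    rw [← Nat.card_coe_set_eq]; rfl
  have hU : {l : List ℕ | l.Chain' MTStep ∧ l ≠ [] ∧ ∀ v ∈ l, v ≤ n}
      = ⋃ q ∈ Finset.range (n + 1) ×ˢ Finset.range (n + 1), S q.1 q.2 := by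
    ext l
    simp only [Set.mem_setOf_eq, Set.mem_iUnion, Finset.mem_product, Finset.mem_range]
    constructor
    · rintro ⟨hc, hne, hall⟩
      refine ⟨(l.head hne, l.getLast hne), ⟨?_, ?_⟩, hc, ?_, ?_⟩
      · exact Nat.lt_succ_of_le (hall _ (List.head_mem hne))
      · exact Nat.lt_succ_of_le (hall _ (List.getLast_mem hne))
      · exact (List.head?_eq_head hne)
      · exact (List.getLast?_eq_getLast hne)
    · rintro ⟨⟨i, j⟩, ⟨hi, hj⟩, hc, hh, hg⟩
      have hne : l ≠ [] := by rintro rfl; simp at hh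
      refine ⟨hc, hne, fun v hv => ?_⟩
      have := le_getLast (sorted_of_chain' hc) hg hv
      omega
  rw [hcard, hU, ncard_biUnion _ _ (fun q _ => finite_S q.1 q.2) ?dis]
  case dis =>
    rintro ⟨i, j⟩ - ⟨i', j'⟩ - hne
    rw [Set.disjoint_left]
    rintro l ⟨hc, hh, hg⟩ ⟨hc', hh', hg'⟩
    exact hne (Prod.ext (Option.some_injective _ (hh.symm.trans hh'))
      (Option.some_injective _ (hg.symm.trans hg')))
  have hval : ∀ i j : ℕ, (S i j).ncard = if i ≤ j then p (j - i) else 0 := by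
    intro i j
    by_cases hij : i ≤ j
    · rw [if_pos hij, ← Nat.add_sub_cancel' hij, ncard_S_shift, ← hp']
      congr 1
      omega
    · rw [if_neg hij, S_empty_of_lt (by omega), Set.ncard_empty]
  calc ∑ q ∈ Finset.range (n + 1) ×ˢ Finset.range (n + 1), (S q.1 q.2).ncard
      = ∑ i ∈ Finset.range (n + 1), ∑ j ∈ Finset.range (n + 1),
          (if i ≤ j then p (j - i) else 0) := by
        rw [Finset.sum_product]
        exact Finset.sum_congr rfl fun i _ => Finset.sum_congr rfl fun j _ => hval i j
    _ = ∑ j ∈ Finset.range (n + 1), ∑ i ∈ Finset.range (n + 1),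
          (if i ≤ j then p (j - i) else 0) := Finset.sum_comm
    _ = ∑ j ∈ Finset.range (n + 1), ∑ i ∈ Finset.range (j + 1), p (j - i) := by
        refine Finset.sum_congr rfl fun j hj => ?_
        rw [← Finset.sum_subset (Finset.range_subset_range.mpr
          (Nat.succ_le_succ (Nat.lt_succ_iff.mp (Finset.mem_range.mp hj))))]
        · exact Finset.sum_congr rfl fun i hi =>
            if_pos (Nat.lt_succ_iff.mp (Finset.mem_range.mp hi))
        · intro i _ hi2
          rw [if_neg]
          intro hle
          exact hi2 (Finset.mem_range.mpr (Nat.lt_succ_of_le hle))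
    _ = ∑ j ∈ Finset.range (n + 1), ∑ d ∈ Finset.range (j + 1), p d := by
        refine Finset.sum_congr rfl fun j _ => ?_
        rw [← Finset.sum_range_reflect p (j + 1)]
        refine Finset.sum_congr rfl fun i _ => ?_
        have h : j + 1 - 1 - i = j - i := by omega
        rw [h]
    _ = ∑ m ∈ Finset.range (n + 1), p m * (n - m + 1) := sum_triangle p n
end

section
/- Let p_m be the number of paths from 0 to m in a quiver with vertices the nonnegative integers and e_s edges from i to i+s for each s ≥ 1, where e_s depends only on s. Then p_0 = 1 and p_m = Σ_{i=0}^{m-1} p_i e_{m-i} for all m ≥ 1. If moreover e_1 = r_1 + r_2 + |S| - 1, e_m = r_2 for even m ≥ 2, and e_m = r_1 + r_2 for odd m ≥ 3, then p_m = e_1 p_{m-1} + (r_2 + 1) p_{m-2} + (1 - |S|) p_{m-3} for m ≥ 3. -/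
/-- A path from `0` to `m` in the quiver with vertices `ℕ` and `e s` edges from `i` to `i + s`
(for each `s ≥ 1`): it is encoded as the list of its successive edges, each edge being a pair
`(s, t)` where `s ≥ 1` is the length of the step and `t < e s` labels which of the `e s`
parallel edges is used.  The sources/targets are determined by the condition that the steps
sum to `m`, starting from `0`. -/
def LabelledPath (e : ℕ → ℕ) (m : ℕ) : Type :=
  { l : List (ℕ × ℕ) // (∀ x ∈ l, 1 ≤ x.1 ∧ x.2 < e x.1) ∧ (l.map Prod.fst).sum = m }

instance (e : ℕ → ℕ) : Unique (LabelledPath e 0) where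
  default := ⟨[], by simp⟩
  uniq := by
    rintro ⟨l, h1, h2⟩
    have : l = [] := by
      cases l with
      | nil => rfl
      | cons a t =>
        exfalso
        simp only [List.map_cons, List.sum_cons] at h2
        have := (h1 a (by simp)).1
        omega
    subst this; rfl

/-- Decomposition of a path by its first edge. -/
noncomputable def pathEquiv (e : ℕ → ℕ) (m : ℕ) (hm : 1 ≤ m) :
    (Σ i : Fin m, Fin (e (m - i)) × LabelledPath e i) ≃ LabelledPath e m := by
  apply Equiv.ofBijective
    (fun x => ⟨(m - x.1.1, x.2.1.1) :: x.2.2.1, by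
      constructor
      · rintro y hy
        rcases List.mem_cons.1 hy with h | h
        · subst h
          exact ⟨by have := x.1.2; omega, x.2.1.2⟩
        · exact x.2.2.2.1 y h
      · simp only [List.map_cons, List.sum_cons, x.2.2.2.2]
        have := x.1.2; omega⟩)
  constructor
  · rintro ⟨⟨i, hi⟩, ⟨t, ht⟩, ⟨l, hl⟩⟩ ⟨⟨i', hi'⟩, ⟨t', ht'⟩, ⟨l', hl'⟩⟩ h
    have h' := congrArg (fun x : LabelledPath e m => x.1) h
    simp only [List.cons.injEq, Prod.mk.injEq] at h'
    obtain ⟨⟨h1, h2⟩, h3⟩ := h'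
    have hii : i = i' := by omega
    subst hii; subst h2; subst h3
    rfl
  · rintro ⟨l, h1, h2⟩
    match l with
    | [] => simp at h2; omega
    | x :: l' =>
      simp only [List.map_cons, List.sum_cons] at h2
      have hx := h1 x (by simp)
      refine ⟨⟨⟨(l'.map Prod.fst).sum, by omega⟩, ⟨x.2, ?_⟩,
        ⟨l', fun y hy => h1 y (List.mem_cons_of_mem _ hy), rfl⟩⟩, ?_⟩
      · have : m - (l'.map Prod.fst).sum = x.1 := by omega
        rw [this]; exact hx.2
      · apply Subtype.ext
        simp only
        have : m - (l'.map Prod.fst).sum = x.1 := by omega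
        rw [this]

instance labelledPathFinite (e : ℕ → ℕ) (m : ℕ) : Finite (LabelledPath e m) := by
  induction m using Nat.strong_induction_on with
  | _ m ih =>
    match m with
    | 0 => infer_instance
    | n + 1 =>
      have : ∀ i : Fin (n+1), Finite (LabelledPath e i) := fun i => ih i i.2
      exact Finite.of_equiv _ (pathEquiv e (n+1) (by omega))

theorem card_rec (e : ℕ → ℕ) (m : ℕ) (hm : 1 ≤ m) :
    Nat.card (LabelledPath e m) =
      ∑ i ∈ Finset.range m, Nat.card (LabelledPath e i) * e (m - i) := by
  haveI : ∀ i : ℕ, Fintype (LabelledPath e i) := fun i => Fintype.ofFinite _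
  rw [← Nat.card_congr (pathEquiv e m hm), Nat.card_eq_fintype_card, Fintype.card_sigma]
  rw [← Fin.sum_univ_eq_sum_range (fun i => Nat.card (LabelledPath e i) * e (m - i))]
  refine Finset.sum_congr rfl fun i _ => ?_
  rw [Fintype.card_prod, Fintype.card_fin, Nat.card_eq_fintype_card, Nat.mul_comm]



/-- Let `p m` be the number of paths from `0` to `m` in a quiver with
vertices the nonnegative integers and `e s` edges from `i` to `i+s`.  Then `p 0 = 1` and
`p m = ∑_{i=0}^{m-1} p i * e (m-i)` for `m ≥ 1`.  If moreover
`e 1 = r₁ + r₂ + |S| - 1`, `e m = r₂` for even `m ≥ 2` and `e m = r₁ + r₂` for odd `m ≥ 3`,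
then `p m = e 1 * p (m-1) + (r₂ + 1) * p (m-2) + (1 - |S|) * p (m-3)` for `m ≥ 3`
(an identity of integers). -/
theorem stmt19 (e : ℕ → ℕ) (p : ℕ → ℕ) (hp : ∀ m, p m = Nat.card (LabelledPath e m)) :
    (p 0 = 1 ∧ ∀ m : ℕ, 1 ≤ m → p m = ∑ i ∈ Finset.range m, p i * e (m - i)) ∧
    (∀ r₁ r₂ s : ℕ,
      (e 1 : ℤ) = (r₁ : ℤ) + r₂ + s - 1 →
      (∀ m : ℕ, 2 ≤ m → Even m → e m = r₂) →
      (∀ m : ℕ, 3 ≤ m → Odd m → e m = r₁ + r₂) →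
      ∀ m : ℕ, 3 ≤ m →
        (p m : ℤ) = (e 1 : ℤ) * p (m - 1) + ((r₂ : ℤ) + 1) * p (m - 2)
          + (1 - (s : ℤ)) * p (m - 3)) := by
  have key : ∀ m : ℕ, 1 ≤ m → p m = ∑ i ∈ Finset.range m, p i * e (m - i) := by
    intro m hm
    simp only [hp]
    exact card_rec e m hm
  have p0 : p 0 = 1 := by rw [hp]; exact Nat.card_unique
  refine ⟨⟨p0, key⟩, ?_⟩
  intro r₁ r₂ s he1 hev hod m hm
  obtain ⟨n, rfl⟩ : ∃ n, m = n + 3 := ⟨m - 3, by omega⟩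
  have e3 : e 3 = r₁ + r₂ := hod 3 le_rfl (by decide)
  have e2 : e 2 = r₂ := hev 2 le_rfl (by decide)
  have hshift : ∀ k : ℕ, 2 ≤ k → e (k + 2) = e k := by
    intro k hk
    rcases Nat.even_or_odd k with h | h
    · rw [hev k hk h, hev (k + 2) (by omega) (h.add even_two)]
    · have h3 : 3 ≤ k := by obtain ⟨j, hj⟩ := h; omega
      rw [hod k h3 h, hod (k + 2) (by omega) (h.add_even even_two)]
  have hA := key (n + 3) (by omega)
  have hB := key (n + 1) (by omega)
  rw [Finset.sum_range_succ, Finset.sum_range_succ, Finset.sum_range_succ] at hA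
  rw [Finset.sum_range_succ] at hB
  have g1 : n + 3 - (n + 2) = 1 := by omega
  have g2 : n + 3 - (n + 1) = 2 := by omega
  have g3 : n + 3 - n = 3 := by omega
  have g4 : n + 1 - n = 1 := by omega
  rw [g1, g2, g3, e3, e2] at hA
  rw [g4] at hB
  have hsum : ∑ i ∈ Finset.range n, p i * e (n + 3 - i)
      = ∑ i ∈ Finset.range n, p i * e (n + 1 - i) := by
    refine Finset.sum_congr rfl fun i hi => ?_
    have hi' : i < n := Finset.mem_range.mp hi
    have : n + 3 - i = (n + 1 - i) + 2 := by omega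
    rw [this, hshift _ (by omega)]
  rw [hsum] at hA
  have hAZ := congrArg (Nat.cast : ℕ → ℤ) hA
  have hBZ := congrArg (Nat.cast : ℕ → ℤ) hB
  push_cast at hAZ hBZ
  have gm1 : n + 3 - 1 = n + 2 := by omega
  have gm2 : n + 3 - 2 = n + 1 := by omega
  have gm3 : n + 3 - 3 = n := by omega
  rw [gm1, gm2, gm3]
  linear_combination hAZ - hBZ - (p n : ℤ) * he1
end
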